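/- Verma relation for type A_2: let f_i, f_j be elements of a ℚ(q)-algebra satisfying the q-Serre relations f_i^2 f_j − (q+q^{-1}) f_i f_j f_i + f_j f_i^2 = 0 and f_j^2 f_i − (q+q^{-1}) f_j f_i f_j + f_i f_j^2 = 0. Then for all natural numbers k, l: f_i^l f_j^{k+l} f_i^k = f_j^k f_i^{k+l} f_j^l. -/

import Mathlib

namespace VermaA2
variable {F : Type*} [Field F]

def ee (q v : F) : ℕ → F
  | 0 => 0
  | (s+1) => q * ee q v s + v ^ s
@[simp] lemma ee_zero (q v : F) : ee q v 0 = 0 := rfl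
lemma ee_succ (q v : F) (s : ℕ) : ee q v (s+1) = q * ee q v s + v ^ s := rfl
lemma ee_sub (q v : F) (s : ℕ) : (q - v) * ee q v s = q ^ s - v ^ s := by
  induction s with
  | zero => simp
  | succ s ih => rw [ee_succ]; ring_nf; linear_combination q * ih
lemma ee_alt (q v : F) (s : ℕ) : ee q v (s+1) = q ^ s + v * ee q v s := by
  rw [ee_succ]; linear_combination ee_sub q v s

lemma ee_sc (q v : F) (h : q * v = 1) (a b : ℕ) :
    q^(b+1) * v^2 * ee q v a + q^a * ee q v (b+1)
      = q^(a+1) * v^2 * ee q v b + q^b * ee q v (a+1) := by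
  rw [ee_succ, ee_succ]
  linear_combination (q^b * v * ee q v a - q^a * v * ee q v b) * h
    - q^b * ee_sub q v a + q^a * ee_sub q v b

def cc (q v : F) : ℕ → ℕ → ℕ → F
  | 0, _, 0 => 1
  | 0, _, _+1 => 0
  | m+1, n, 0 => q ^ n * cc q v m n 0
  | m+1, n, t+1 => q ^ n * v ^ (2*(t+1)) * cc q v m n (t+1) + ee q v (n - t) * cc q v m n t
@[simp] lemma cc_zz (q v : F) (n : ℕ) : cc q v 0 n 0 = 1 := rfl
@[simp] lemma cc_zs (q v : F) (n t : ℕ) : cc q v 0 n (t+1) = 0 := rfl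
lemma cc_sz (q v : F) (m n : ℕ) : cc q v (m+1) n 0 = q ^ n * cc q v m n 0 := rfl
lemma cc_ss (q v : F) (m n t : ℕ) :
    cc q v (m+1) n (t+1)
      = q ^ n * v ^ (2*(t+1)) * cc q v m n (t+1) + ee q v (n - t) * cc q v m n t := rfl
lemma cc_zero_left (q v : F) : ∀ m n t, m < t → cc q v m n t = 0 := by
  intro m
  induction m with
  | zero => intro n t ht; match t, ht with | (t+1), _ => rfl
  | succ m ih =>
    intro n t ht
    match t, ht with
    | (t+1), ht =>
      rw [cc_ss, ih n (t+1) (by omega), ih n t (by omega)]; ring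
lemma cc_zero_right (q v : F) : ∀ m n t, n < t → cc q v m n t = 0 := by
  intro m
  induction m with
  | zero => intro n t ht; match t, ht with | (t+1), _ => rfl
  | succ m ih =>
    intro n t ht
    match t, ht with
    | (t+1), ht =>
      rw [cc_ss, ih n (t+1) (by omega)]
      rcases Nat.eq_or_lt_of_le (Nat.lt_succ_iff.mp ht) with h' | h'
      · subst h'; show _ * _ * _ + ee q v (n-n) * _ = 0; simp [ee]
      · rw [ih n t h']; ring

/-- n-recursion, t = 0 case -/
lemma cc_nrec0 (q v : F) : ∀ m n, cc q v m (n+1) 0 = q ^ m * cc q v m n 0 := by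
  intro m
  induction m with
  | zero => intro n; simp
  | succ m ih =>
    intro n
    rw [cc_sz, cc_sz, ih]
    ring

/-- n-recursion, successor case -/
lemma cc_nrec1 (q v : F) (h : q * v = 1) :
    ∀ m n t, cc q v m (n+1) (t+1)
      = q ^ m * v ^ (2*(t+1)) * cc q v m n (t+1) + ee q v (m - t) * cc q v m n t := by
  intro m
  induction m with
  | zero =>
    intro n t
    simp [Nat.zero_sub]
  | succ m ih =>
    intro n t
    rw [cc_ss, ih n t]
    cases t with
    | zero =>
      rw [cc_nrec0, cc_sz, cc_ss q v m n 0]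
      simp only [Nat.sub_zero, Nat.add_sub_cancel]
      linear_combination (cc q v m n 0) * ee_sc q v h m n
    | succ s =>
      rw [ih n s, cc_ss q v m n s, cc_ss q v m n (s+1)]
      by_cases hm : s < m
      · by_cases hn : s < n
        · obtain ⟨a, rfl⟩ : ∃ a, m = a + s + 1 := ⟨m - s - 1, by omega⟩
          obtain ⟨b, rfl⟩ : ∃ b, n = b + s + 1 := ⟨n - s - 1, by omega⟩
          simp only [show a+s+1-(s+1) = a from by omega, show b+s+1-(s+1) = b from by omega,
            show a+s+1-s = a+1 from by omega, show b+s+1-s = b+1 from by omega,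
            show a+s+1+1-(s+1) = a+1 from by omega, show b+s+1+1-(s+1) = b+1 from by omega]
          linear_combination (cc q v (a+s+1) (b+s+1) (s+1)) * (q^(s+1) * v^(2*s+2)) *
            ee_sc q v h a b
        · have z1 : cc q v m n (s+1) = 0 := cc_zero_right q v m n (s+1) (by omega)
          have z2 : cc q v m n (s+2) = 0 := cc_zero_right q v m n (s+2) (by omega)
          simp only [show n - s = 0 from by omega, show n - (s+1) = 0 from by omega,
            show n+1-(s+1) = 0 from by omega, show s+1+1 = s+2 from rfl, z1, z2, ee_zero]
          ring
      · have z1 : cc q v m n (s+1) = 0 := cc_zero_left q v m n (s+1) (by omega)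
        have z2 : cc q v m n (s+2) = 0 := cc_zero_left q v m n (s+2) (by omega)
        simp only [show m - s = 0 from by omega, show m - (s+1) = 0 from by omega,
          show m+1-(s+1) = 0 from by omega, show s+1+1 = s+2 from rfl, z1, z2, ee_zero]
        ring

/-- symmetry of the coefficients -/
lemma cc_symm (q v : F) (h : q * v = 1) : ∀ n m t, cc q v m n t = cc q v n m t := by
  intro n
  induction n with
  | zero =>
    intro m t
    induction m generalizing t with
    | zero => rfl
    | succ m ih =>
      cases t with
      | zero => rw [cc_sz, ih 0]; simp
      | succ t => rw [cc_ss, ih (t+1), ih t]; simp [ee]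
  | succ n ih =>
    intro m t
    cases t with
    | zero => rw [cc_nrec0, cc_sz, ih m 0]
    | succ t => rw [cc_nrec1 q v h, cc_ss, ih m (t+1), ih m t]

lemma rearr {M : Type*} [AddCommGroup M] (x y z : M) (h : x - y + z = 0) : x = y - z := by
  have hx : x = (x - y + z) + (y - z) := by abel
  rw [hx, h, zero_add]

variable {A : Type*} [Ring A] [Algebra F A]

section Heis
variable (q v : F) (fi fj W : A)

lemma fi_W_pow (hFi : fi * W = v • (W * fi)) :
    ∀ t, fi * W ^ t = v ^ t • (W ^ t * fi) := by
  intro t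
  induction t with
  | zero => simp
  | succ t ih =>
    rw [pow_succ, ← mul_assoc, ih, smul_mul_assoc, mul_assoc, hFi, mul_smul_comm,
      smul_smul, pow_succ, mul_assoc]

lemma fi_fj_pow (hij : fi * fj = W + q • (fj * fi)) (hWj : W * fj = v • (fj * W)) :
    ∀ s, fi * fj ^ (s+1)
      = q ^ (s+1) • (fj ^ (s+1) * fi) + ee q v (s+1) • (fj ^ s * W) := by
  intro s
  induction s with
  | zero => simp [hij, ee_succ]; abel
  | succ s ih =>
    conv_lhs => rw [pow_succ fj (s+1), ← mul_assoc]
    rw [ih, add_mul, smul_mul_assoc, smul_mul_assoc, mul_assoc, mul_assoc, hij, hWj]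
    have e1 : fj ^ (s+1) * (fj * fi) = fj ^ (s+1+1) * fi := by
      rw [← mul_assoc, ← pow_succ]
    have e2 : fj ^ s * (v • (fj * W)) = v • (fj ^ (s+1) * W) := by
      rw [mul_smul_comm, ← mul_assoc, ← pow_succ]
    rw [e2, ee_alt q v (s+1)]
    simp only [mul_add, mul_smul_comm, smul_add, smul_smul, e1]
    module

lemma coeff_eq (hqv : q * v = 1) {t n : ℕ} (h : t ≤ n) :
    q ^ (n-t) * v ^ t = q ^ n * v ^ (2*t) := by
  obtain ⟨s, rfl⟩ : ∃ s, n = s + t := ⟨n - t, by omega⟩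
  have h1 : q ^ t * v ^ t = 1 := by rw [← mul_pow, hqv, one_pow]
  have h2 : v ^ (2*t) = v ^ t * v ^ t := by rw [two_mul, pow_add]
  rw [Nat.add_sub_cancel, h2, pow_add]
  linear_combination (-(q ^ s * v ^ t)) * h1

/-- pointwise key step -/
lemma key_step (hqv : q * v = 1) (hFi : fi * W = v • (W * fi))
    (hij : fi * fj = W + q • (fj * fi)) (hWj : W * fj = v • (fj * W))
    (m n : ℕ) {t : ℕ} (htm : t ≤ m) :
    fi * (cc q v m n t • (fj ^ (n-t) * W ^ t * fi ^ (m-t)))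
      = (q ^ n * v ^ (2*t) * cc q v m n t) • (fj ^ (n-t) * W ^ t * fi ^ (m+1-t))
        + (ee q v (n-t) * cc q v m n t) • (fj ^ (n-t-1) * W ^ (t+1) * fi ^ (m-t)) := by
  rcases Nat.lt_or_ge n t with hgt | htn
  · rw [cc_zero_right q v m n t hgt]; simp
  · rw [← coeff_eq q v hqv htn]
    rcases Nat.eq_or_lt_of_le htn with heq | hlt
    · subst heq
      simp only [Nat.sub_self, pow_zero, one_mul, ee_zero, zero_mul, zero_smul, add_zero]
      rw [mul_smul_comm, ← mul_assoc, fi_W_pow v fi W hFi t, smul_mul_assoc, mul_assoc,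
        ← pow_succ', smul_smul, show m - t + 1 = m + 1 - t from by omega, mul_comm]
    · obtain ⟨s, rfl⟩ : ∃ s, n = t + s + 1 := ⟨n - t - 1, by omega⟩
      simp only [show t+s+1-t = s+1 from by omega, show t+s+1-t-1 = s from by omega, show s+1-1 = s from by omega,
        show m+1-t = (m-t)+1 from by omega]
      have hA : fi * (fj ^ (s+1) * W ^ t * fi ^ (m-t))
          = (q^(s+1) * v^t) • (fj^(s+1) * (W^t * fi^((m-t)+1)))
            + ee q v (s+1) • (fj^s * (W^(t+1) * fi^(m-t))) := by
        calc fi * (fj ^ (s+1) * W ^ t * fi ^ (m-t))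
            = (fi * fj^(s+1)) * (W^t * fi^(m-t)) := by
              rw [mul_assoc (fj^(s+1)), ← mul_assoc fi]
          _ = (q^(s+1) • (fj^(s+1) * fi) + ee q v (s+1) • (fj^s * W)) * (W^t * fi^(m-t)) := by
              rw [fi_fj_pow q v fi fj W hij hWj s]
          _ = q^(s+1) • (fj^(s+1) * (fi * (W^t * fi^(m-t))))
                + ee q v (s+1) • (fj^s * (W * (W^t * fi^(m-t)))) := by
              simp only [add_mul, smul_mul_assoc, mul_assoc]
          _ = q^(s+1) • (fj^(s+1) * (v^t • (W^t * fi^((m-t)+1))))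
                + ee q v (s+1) • (fj^s * (W^(t+1) * fi^(m-t))) := by
              rw [← mul_assoc fi, fi_W_pow v fi W hFi t, smul_mul_assoc, mul_assoc,
                ← pow_succ', ← mul_assoc W, ← pow_succ']
          _ = (q^(s+1) * v^t) • (fj^(s+1) * (W^t * fi^((m-t)+1)))
                + ee q v (s+1) • (fj^s * (W^(t+1) * fi^(m-t))) := by
              rw [mul_smul_comm, smul_smul]
      rw [mul_smul_comm, hA]
      simp only [smul_add, smul_smul, mul_assoc]
      module

/-- the main expansion -/
lemma expansion (hqv : q * v = 1) (hFi : fi * W = v • (W * fi))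
    (hij : fi * fj = W + q • (fj * fi)) (hWj : W * fj = v • (fj * W)) :
    ∀ m n, fi ^ m * fj ^ n
      = ∑ t ∈ Finset.range (m+1), cc q v m n t • (fj ^ (n-t) * W ^ t * fi ^ (m-t)) := by
  intro m
  induction m with
  | zero => intro n; simp [Finset.range_one]
  | succ m ih =>
    intro n
    have hkey : ∀ t ∈ Finset.range (m+1),
        fi * (cc q v m n t • (fj ^ (n-t) * W ^ t * fi ^ (m-t)))
          = (q ^ n * v ^ (2*t) * cc q v m n t) • (fj ^ (n-t) * W ^ t * fi ^ (m+1-t))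
            + (ee q v (n-t) * cc q v m n t)
              • (fj ^ (n-(t+1)) * W ^ (t+1) * fi ^ (m+1-(t+1))) := by
      intro t ht
      have htm : t ≤ m := Nat.lt_succ_iff.mp (Finset.mem_range.mp ht)
      rw [key_step q v fi fj W hqv hFi hij hWj m n htm,
        show n-(t+1) = n-t-1 from by omega, show m+1-(t+1) = m-t from by omega]
    rw [pow_succ', mul_assoc, ih, Finset.mul_sum, Finset.sum_congr rfl hkey,
      Finset.sum_add_distrib]
    conv_rhs => rw [Finset.sum_range_succ']
    have hsplit : ∀ t ∈ Finset.range (m+1),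
        cc q v (m+1) n (t+1) • (fj ^ (n-(t+1)) * W ^ (t+1) * fi ^ (m+1-(t+1)))
          = (q ^ n * v ^ (2*(t+1)) * cc q v m n (t+1))
              • (fj ^ (n-(t+1)) * W ^ (t+1) * fi ^ (m+1-(t+1)))
            + (ee q v (n-t) * cc q v m n t)
              • (fj ^ (n-(t+1)) * W ^ (t+1) * fi ^ (m+1-(t+1))) := by
      intro t _
      rw [cc_ss, add_smul]
    rw [Finset.sum_congr rfl hsplit, Finset.sum_add_distrib]
    have hA : (∑ t ∈ Finset.range (m+1),
          (q ^ n * v ^ (2*t) * cc q v m n t) • (fj ^ (n-t) * W ^ t * fi ^ (m+1-t)))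
        = ∑ t ∈ Finset.range (m+1+1),
          (q ^ n * v ^ (2*t) * cc q v m n t) • (fj ^ (n-t) * W ^ t * fi ^ (m+1-t)) := by
      conv_rhs => rw [Finset.sum_range_succ]
      rw [cc_zero_left q v m n (m+1) (by omega)]
      simp
    rw [hA, Finset.sum_range_succ', cc_sz]
    simp only [Nat.mul_zero, pow_zero, mul_one, Nat.sub_zero]
    abel

/-- Verma identity in the q-Heisenberg presentation -/
lemma heis_verma (hqv : q * v = 1) (hFi : fi * W = v • (W * fi))
    (hij : fi * fj = W + q • (fj * fi)) (hWj : W * fj = v • (fj * W)) (k l : ℕ) :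
    fi ^ l * fj ^ (k+l) * fi ^ k = fj ^ k * fi ^ (k+l) * fj ^ l := by
  have hL : fi ^ l * fj ^ (k+l) * fi ^ k
      = ∑ t ∈ Finset.range (l+1),
          cc q v (k+l) l t • (fj ^ (k+l-t) * W ^ t * fi ^ (k+l-t)) := by
    rw [expansion q v fi fj W hqv hFi hij hWj l (k+l), Finset.sum_mul]
    refine Finset.sum_congr rfl (fun t ht => ?_)
    have htl : t ≤ l := Nat.lt_succ_iff.mp (Finset.mem_range.mp ht)
    rw [smul_mul_assoc, mul_assoc, ← pow_add, cc_symm q v hqv (k+l) l t,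
      show l - t + k = k+l-t from by omega]
  have hR : fj ^ k * fi ^ (k+l) * fj ^ l
      = ∑ t ∈ Finset.range (k+l+1),
          cc q v (k+l) l t • (fj ^ (k+l-t) * W ^ t * fi ^ (k+l-t)) := by
    rw [mul_assoc, expansion q v fi fj W hqv hFi hij hWj (k+l) l, Finset.mul_sum]
    refine Finset.sum_congr rfl (fun t _ => ?_)
    rcases le_or_gt t l with htl | hlt
    · rw [mul_smul_comm, ← mul_assoc, ← mul_assoc, ← pow_add,
        show k + (l-t) = k+l-t from by omega]
    · rw [cc_zero_right q v (k+l) l t hlt]; simp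
  rw [hL, hR]
  refine Finset.sum_subset (Finset.range_subset_range.mpr (by omega)) (fun t _ ht => ?_)
  have hlt : l < t := by
    have := Finset.mem_range.not.mp ht
    omega
  rw [cc_zero_right q v (k+l) l t hlt, zero_smul]

end Heis

/-- Verma from the Serre relations, invertible q -/
lemma serre_verma (q v : F) (hqv : q * v = 1) (fi fj : A)
    (h1 : fi ^ 2 * fj - (q + v) • (fi * fj * fi) + fj * fi ^ 2 = 0)
    (h2 : fj ^ 2 * fi - (q + v) • (fj * fi * fj) + fi * fj ^ 2 = 0)
    (k l : ℕ) :
    fi ^ l * fj ^ (k + l) * fi ^ k = fj ^ k * fi ^ (k + l) * fj ^ l := by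
  have hvq : v * q - 1 = 0 := by rw [mul_comm, hqv, sub_self]
  set W : A := fi * fj - q • (fj * fi) with hW
  have hij : fi * fj = W + q • (fj * fi) := by rw [hW]; abel
  have hFi : fi * W = v • (W * fi) := by
    rw [← sub_eq_zero]
    have key : fi * W - v • (W * fi)
        = (fi ^ 2 * fj - (q + v) • (fi * fj * fi) + fj * fi ^ 2)
          + (v * q - 1) • (fj * fi ^ 2) := by
      rw [hW]
      simp only [mul_sub, sub_mul, mul_smul_comm, smul_mul_assoc, smul_sub, smul_smul,
        pow_two, mul_assoc]
      module
    rw [key, h1, hvq, zero_smul, add_zero]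
  have hWj : W * fj = v • (fj * W) := by
    rw [← sub_eq_zero]
    have key : W * fj - v • (fj * W)
        = (fj ^ 2 * fi - (q + v) • (fj * fi * fj) + fi * fj ^ 2)
          + (v * q - 1) • (fj ^ 2 * fi) := by
      rw [hW]
      simp only [mul_sub, sub_mul, mul_smul_comm, smul_mul_assoc, smul_sub, smul_smul,
        pow_two, mul_assoc]
      module
    rw [key, h2, hvq, zero_smul, add_zero]
  exact heis_verma q v fi fj W hqv hFi hij hWj k l

section ZeroCase
variable {A : Type*} [Ring A]

lemma cross_sq {x y : A} (h : x ^ 2 * y + y * x ^ 2 = 0) :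
    ∀ m, x ^ 2 * y ^ m = ((-1 : ℤ) ^ m) • (y ^ m * x ^ 2) := by
  have hxy : x ^ 2 * y = -(y * x ^ 2) := by
    rw [← sub_eq_zero]; rw [sub_neg_eq_add]; exact h
  intro m
  induction m with
  | zero => simp
  | succ m ih =>
    conv_lhs => rw [pow_succ y m, ← mul_assoc]
    rw [ih, smul_mul_assoc, mul_assoc, hxy, mul_neg, smul_neg, ← neg_smul,
      ← mul_assoc, ← pow_succ, pow_succ (-1 : ℤ) m]
    ring_nf

lemma block {x y : A} (h : x ^ 2 * y + y * x ^ 2 = 0) (c m : ℕ) :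
    x ^ (2*c) * y ^ m = ((-1 : ℤ) ^ (c*m)) • (y ^ m * x ^ (2*c)) := by
  induction c with
  | zero => simp
  | succ c ih =>
    have hp : x ^ (2*(c+1)) = x ^ (2*c) * x ^ 2 := by
      rw [show 2*(c+1) = 2*c+2 from by ring, pow_add]
    rw [hp, mul_assoc, cross_sq h m, mul_smul_comm, ← mul_assoc, ih, smul_mul_assoc,
      smul_smul, mul_assoc, ← pow_add, ← pow_add,
      show 2*c + 2 = 2*(c+1) from by ring,
      show m + c*m = (c+1)*m from by ring]

lemma block' {x y : A} (h : x ^ 2 * y + y * x ^ 2 = 0) (c m : ℕ) :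
    y ^ m * x ^ (2*c) = ((-1 : ℤ) ^ (c*m)) • (x ^ (2*c) * y ^ m) := by
  rw [block h c m, smul_smul, ← pow_add, Even.neg_one_pow ⟨c*m, rfl⟩, one_smul]

lemma verma_zero (fi fj : A)
    (h1 : fi ^ 2 * fj + fj * fi ^ 2 = 0) (h2 : fj ^ 2 * fi + fi * fj ^ 2 = 0)
    (k l : ℕ) :
    fi ^ l * fj ^ (k + l) * fi ^ k = fj ^ k * fi ^ (k + l) * fj ^ l := by
  rcases Nat.even_or_odd k with hk | hk
  · obtain ⟨c, rfl⟩ : ∃ c, k = 2*c := by rcases hk with ⟨c, hc⟩; exact ⟨c, by omega⟩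
    rw [mul_assoc, block' h1 c (2*c+l), mul_smul_comm, ← mul_assoc, ← pow_add,
      block h2 c (2*c+l), smul_mul_assoc, mul_assoc, ← pow_add,
      show l + 2*c = 2*c + l from by ring]
  · rcases Nat.even_or_odd l with hl | hl
    · obtain ⟨c, rfl⟩ : ∃ c, l = 2*c := by rcases hl with ⟨c, hc⟩; exact ⟨c, by omega⟩
      rw [block h1 c (k+2*c), smul_mul_assoc, mul_assoc, ← pow_add, mul_assoc,
        block' h2 c (k+2*c), mul_smul_comm, ← mul_assoc, ← pow_add,
        show 2*c + k = k + 2*c from by ring]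
    · obtain ⟨c, hc⟩ : ∃ c, k + l = 2*c := by
        rcases hk with ⟨a, ha⟩; rcases hl with ⟨b, hb⟩; exact ⟨a+b+1, by omega⟩
      rw [hc, mul_assoc, block h2 c k, mul_smul_comm, ← mul_assoc, ← pow_add,
        block' h1 c k, smul_mul_assoc, mul_assoc, ← pow_add,
        show l + k = 2*c from by omega, show k + l = 2*c from by omega]

end ZeroCase
end VermaA2


/-- Verma relation for type A₂: if `f_i, f_j` satisfy the simply-laced q-Serre
relations, then `f_i^l f_j^{k+l} f_i^k = f_j^k f_i^{k+l} f_j^l` for all `k, l`. -/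
theorem verma_relation_A2 {F A : Type*} [Field F] [Ring A] [Algebra F A]
    (q : F) (fi fj : A)
    (h1 : fi ^ 2 * fj - (q + q⁻¹) • (fi * fj * fi) + fj * fi ^ 2 = 0)
    (h2 : fj ^ 2 * fi - (q + q⁻¹) • (fj * fi * fj) + fi * fj ^ 2 = 0)
    (k l : ℕ) :
    fi ^ l * fj ^ (k + l) * fi ^ k = fj ^ k * fi ^ (k + l) * fj ^ l := by
  by_cases hq : q = 0
  · subst hq
    rw [inv_zero, add_zero, zero_smul, sub_zero] at h1 h2
    exact VermaA2.verma_zero fi fj h1 h2 k l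
  · exact VermaA2.serre_verma q q⁻¹ (mul_inv_cancel₀ hq) fi fj h1 h2 k l
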